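/- Let N, K, M be positive integers with N ≤ K, let ħ be a nonzero real number, let ν be a nonzero complex number, and let a_1,…,a_M ∈ ℂ and nonzero p_1,…,p_M, q_1,…,q_M ∈ ℂ be parameters such that p_i ≠ q_j and q_i ≠ p_j for all i ≠ j. For (s,t) ∈ ℝ × ℝ^K define the exponential factors e_i(s,t) = exp(ħ⁻¹((Log p_i − Log q_i)·s + Σ_{k=1}^K (p_i^k − q_i^k)·t_k)), the interaction coefficients c_{ij} = ((p_i−p_j)(q_i−q_j))/((p_i−q_j)(q_i−p_j)), and the M-soliton tau function τ(s,t) = Σ_{I ⊆ {1,…,M}} (Π_{i∈I} a_i)·(Π_{i<j, i,j∈I} c_{ij})·Π_{i∈I} e_i(s,t). If for every i = 1,…,M the parameters satisfy p_i^N − ν·Log p_i = q_i^N − ν·Log q_i, then τ satisfies the reduction condition ∂τ/∂t_N(s,t) − ν·∂τ/∂s(s,t) = 0 for all (s,t) ∈ ℝ × ℝ^K. -/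

import Mathlib

open Complex Finset

lemma hasDerivAt_linexp (A γ δ : ℂ) (x : ℝ) :
    HasDerivAt (fun x : ℝ => A * Complex.exp (γ * (x : ℂ) + δ))
      (A * γ * Complex.exp (γ * (x : ℂ) + δ)) x := by
  have h1 : HasDerivAt (fun x : ℝ => γ * (x : ℂ) + δ) γ x := by
    simpa using (((hasDerivAt_id x).ofReal_comp).const_mul γ).add_const δ
  simpa [mul_comm, mul_assoc, mul_left_comm] using h1.cexp.const_mul A

lemma deriv_sum_linexp {ι : Type*} [Fintype ι] (A γ δ : ι → ℂ) (x : ℝ) :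
    deriv (fun x : ℝ => ∑ I : ι, A I * Complex.exp (γ I * (x : ℂ) + δ I)) x
      = ∑ I : ι, A I * γ I * Complex.exp (γ I * (x : ℂ) + δ I) :=
  (HasDerivAt.fun_sum fun I _ => hasDerivAt_linexp (A I) (γ I) (δ I) x).deriv

/-- The M-soliton tau function of the lattice KP hierarchy
(with time variables truncated to `t_1, …, t_K`) satisfies the reduction
condition `∂τ/∂t_N − ν·∂τ/∂s = 0` of the N-th generalized ILW hierarchy,
provided the soliton parameters satisfy `p_i^N − ν·Log p_i = q_i^N − ν·Log q_i`. -/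
theorem stmt_1 (N K M : ℕ) (hN : 0 < N) (hNK : N ≤ K) (hM : 0 < M)
    (hbar : ℝ) (hhbar : hbar ≠ 0) (ν : ℂ) (hν : ν ≠ 0)
    (a p q : Fin M → ℂ) (hp : ∀ i, p i ≠ 0) (hq : ∀ i, q i ≠ 0)
    (hpq : ∀ i j, i ≠ j → p i ≠ q j) (hqp : ∀ i j, i ≠ j → q i ≠ p j)
    (e : Fin M → ℝ → (Fin K → ℝ) → ℂ)
    (he : ∀ i s t, e i s t = Complex.exp ((hbar : ℂ)⁻¹ *
      ((Complex.log (p i) - Complex.log (q i)) * (s : ℂ) +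
        ∑ k : Fin K, (p i ^ (k.val + 1) - q i ^ (k.val + 1)) * (t k : ℂ))))
    (c : Fin M → Fin M → ℂ)
    (hc : ∀ i j, c i j =
      ((p i - p j) * (q i - q j)) / ((p i - q j) * (q i - p j)))
    (τ : ℝ → (Fin K → ℝ) → ℂ)
    (hτ : ∀ s t, τ s t = ∑ I : Finset (Fin M),
      (∏ i ∈ I, a i) * (∏ i ∈ I, ∏ j ∈ I, if i < j then c i j else 1) *
        ∏ i ∈ I, e i s t)
    (hred : ∀ i, p i ^ N - ν * Complex.log (p i)
              = q i ^ N - ν * Complex.log (q i)) :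
    ∀ (s : ℝ) (t : Fin K → ℝ),
      deriv (fun x : ℝ => τ s (Function.update t ⟨N - 1, by omega⟩ x))
          (t ⟨N - 1, by omega⟩)
        - ν * deriv (fun x : ℝ => τ x t) s = 0 := by
  intro s t
  have hnK : N - 1 < K := by omega
  set n : Fin K := ⟨N - 1, hnK⟩ with hn
  show deriv (fun x : ℝ => τ s (Function.update t n x)) (t n)
        - ν * deriv (fun x : ℝ => τ x t) s = 0
  have hnN : n.val + 1 = N := by simp [hn]; omega
  -- phase function
  set φ : Fin M → ℝ → (Fin K → ℝ) → ℂ := fun i s' t' =>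
    (Complex.log (p i) - Complex.log (q i)) * (s' : ℂ) +
      ∑ k : Fin K, (p i ^ (k.val + 1) - q i ^ (k.val + 1)) * (t' k : ℂ) with hφ
  have hφup : ∀ i (x : ℝ), φ i s (Function.update t n x) =
      (p i ^ N - q i ^ N) * (x : ℂ) +
        (φ i s t - (p i ^ N - q i ^ N) * (t n : ℂ)) := by
    intro i x
    have hfun : (fun k : Fin K =>
        (p i ^ (k.val + 1) - q i ^ (k.val + 1)) * ((Function.update t n x k : ℝ) : ℂ))
        = Function.update (fun k : Fin K =>
            (p i ^ (k.val + 1) - q i ^ (k.val + 1)) * (t k : ℂ)) n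
            ((p i ^ N - q i ^ N) * (x : ℂ)) := by
      funext k
      rcases eq_or_ne k n with rfl | hk
      · simp [hnN]
      · simp [Function.update_of_ne hk]
    have hsplit : ∑ k : Fin K, (p i ^ (k.val + 1) - q i ^ (k.val + 1)) * (t k : ℂ)
        = (p i ^ N - q i ^ N) * (t n : ℂ)
          + ∑ k ∈ Finset.univ \ {n}, (p i ^ (k.val + 1) - q i ^ (k.val + 1)) * (t k : ℂ) := by
      rw [Finset.sum_eq_sum_sdiff_singleton_add (Finset.mem_univ n), hnN]
      ring
    simp only [hφ, hfun, Finset.sum_update_of_mem (Finset.mem_univ n), hsplit]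
    ring
  set A : Finset (Fin M) → ℂ := fun I =>
    (∏ i ∈ I, a i) * (∏ i ∈ I, ∏ j ∈ I, if i < j then c i j else 1) with hA
  set γ : Finset (Fin M) → ℂ := fun I =>
    (hbar : ℂ)⁻¹ * ∑ i ∈ I, (p i ^ N - q i ^ N) with hγ
  set β : Finset (Fin M) → ℂ := fun I =>
    (hbar : ℂ)⁻¹ * ∑ i ∈ I, (Complex.log (p i) - Complex.log (q i)) with hβ
  set δ : Finset (Fin M) → ℂ := fun I =>
    (hbar : ℂ)⁻¹ * (∑ i ∈ I, φ i s t) - γ I * (t n : ℂ) with hδ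
  set ε : Finset (Fin M) → ℂ := fun I =>
    (hbar : ℂ)⁻¹ * ∑ i ∈ I,
      ∑ k : Fin K, (p i ^ (k.val + 1) - q i ^ (k.val + 1)) * (t k : ℂ) with hε
  have hprod : ∀ (I : Finset (Fin M)) (s' : ℝ) (t' : Fin K → ℝ),
      (∏ i ∈ I, e i s' t') = Complex.exp ((hbar : ℂ)⁻¹ * ∑ i ∈ I, φ i s' t') := by
    intro I s' t'
    rw [Finset.mul_sum, Complex.exp_sum]
    exact Finset.prod_congr rfl fun i _ => he i s' t'
  have hτ1 : (fun x : ℝ => τ s (Function.update t n x))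
      = fun x : ℝ => ∑ I : Finset (Fin M), A I * Complex.exp (γ I * (x : ℂ) + δ I) := by
    funext x
    rw [hτ]
    refine Finset.sum_congr rfl fun I _ => ?_
    rw [hprod]
    have h1 : ∑ i ∈ I, φ i s (Function.update t n x)
        = (∑ i ∈ I, (p i ^ N - q i ^ N)) * (x : ℂ)
          + (∑ i ∈ I, φ i s t - (∑ i ∈ I, (p i ^ N - q i ^ N)) * (t n : ℂ)) := by
      rw [Finset.sum_congr rfl fun i _ => hφup i x, Finset.sum_add_distrib,
        Finset.sum_sub_distrib, Finset.sum_mul, Finset.sum_mul]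
    congr 1
    refine congrArg Complex.exp ?_
    rw [h1]
    simp only [hδ, hγ]
    ring
  have hτ2 : (fun x : ℝ => τ x t)
      = fun x : ℝ => ∑ I : Finset (Fin M), A I * Complex.exp (β I * (x : ℂ) + ε I) := by
    funext x
    rw [hτ]
    refine Finset.sum_congr rfl fun I _ => ?_
    rw [hprod]
    congr 1
    refine congrArg Complex.exp ?_
    simp only [hφ, hβ, hε, Finset.sum_add_distrib, ← Finset.sum_mul]
    ring
  have hD1 : deriv (fun x : ℝ => τ s (Function.update t n x)) (t n)
      = ∑ I : Finset (Fin M), A I * γ I * Complex.exp (γ I * ((t n : ℝ) : ℂ) + δ I) := by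
    rw [hτ1]; exact deriv_sum_linexp A γ δ (t n)
  have hD2 : deriv (fun x : ℝ => τ x t) s
      = ∑ I : Finset (Fin M), A I * β I * Complex.exp (β I * (s : ℂ) + ε I) := by
    rw [hτ2]; exact deriv_sum_linexp A β ε s
  rw [hD1, hD2, Finset.mul_sum, ← Finset.sum_sub_distrib]
  refine Finset.sum_eq_zero fun I _ => ?_
  have hexp1 : γ I * ((t n : ℝ) : ℂ) + δ I = (hbar : ℂ)⁻¹ * ∑ i ∈ I, φ i s t := by
    rw [hδ]; ring
  have hexp2 : β I * (s : ℂ) + ε I = (hbar : ℂ)⁻¹ * ∑ i ∈ I, φ i s t := by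
    simp only [hβ, hε, hφ, Finset.sum_add_distrib, ← Finset.sum_mul]
    ring
  have hγβ : γ I = ν * β I := by
    have key : ∀ i ∈ I, p i ^ N - q i ^ N
        = ν * (Complex.log (p i) - Complex.log (q i)) := fun i _ => by
      linear_combination hred i
    simp only [hγ, hβ]
    rw [Finset.sum_congr rfl key, ← Finset.mul_sum]
    ring
  rw [hexp1, hexp2, hγβ]
  ring
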